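/- Let R be a finite set of irreducible finite-dimensional complex representations of G containing exactly one representative from each isomorphism class, and let χ_ρ denote the character of ρ ∈ R. Then for all g₁, g₂ ∈ G: ∑_{ρ∈R} ∑_{q∈Q} χ_ρ(g₁⁻¹)·χ_ρ(s(q)·g₂·s(q)⁻¹) equals |C_H(g₁)| (the order of the centralizer of g₁ in H) if g₁ and g₂ are conjugate in H, and equals 0 otherwise. (Equivalently, ∑_{[ρ]∈Ĝ} ∑_{q∈Q} χ_ρ(g₁⁻¹)·χ_{q([ρ])}(g₂) equals |C_H(g₁)| or 0 accordingly, since χ_{q([ρ])}(g₂) = χ_ρ(s(q)g₂s(q)⁻¹).) -/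

import Mathlib

noncomputable section

/-- A representation is irreducible if the space is nonzero and has no nontrivial invariant
subspace. -/
def IsIrredRep {K V : Type} [Group K] [AddCommGroup V] [Module ℂ V]
    (ρ : Representation ℂ K V) : Prop :=
  Nontrivial V ∧
    ∀ W : Submodule ℂ V, (∀ (k : K), ∀ v ∈ W, ρ k v ∈ W) → W = ⊥ ∨ W = ⊤

/-- Two representations are isomorphic if there is an intertwining linear equivalence. -/
def RepIso {K V W : Type} [Group K] [AddCommGroup V] [Module ℂ V]
    [AddCommGroup W] [Module ℂ W]
    (ρ : Representation ℂ K V) (σ : Representation ℂ K W) : Prop :=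
  ∃ e : V ≃ₗ[ℂ] W, ∀ (k : K) (v : V), e (ρ k v) = σ k (e v)

/-- The representation `g ↦ ρ (h·g·h⁻¹)` of the (normal) kernel of `j`, for `h : H`. -/
def conjRep {H Q : Type} [Group H] [Group Q] (j : H →* Q) {V : Type}
    [AddCommGroup V] [Module ℂ V] (ρ : Representation ℂ j.ker V) (h : H) :
    Representation ℂ j.ker V :=
  MonoidHom.comp ρ (MulAut.conjNormal h).toMonoidHom

/-- `τ(q₁,q₂) := s q₁ * s q₂ * (s (q₁ q₂))⁻¹`, an element of `G = ker j`. -/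
def tau {H Q : Type} [Group H] [Group Q] (j : H →* Q) (s : Q → H)
    (hs : ∀ q, j (s q) = q) (q₁ q₂ : Q) : j.ker :=
  ⟨s q₁ * s q₂ * (s (q₁ * q₂))⁻¹, by simp [MonoidHom.mem_ker, hs, mul_assoc]⟩

/-- Transport along an equality of indices, as a linear map. -/
def castHom {Ghat : Type} (V : Ghat → Type) [∀ r, AddCommGroup (V r)]
    [∀ r, Module ℂ (V r)] {a b : Ghat} (h : a = b) : V a →ₗ[ℂ] V b where
  toFun v := cast (congrArg V h) v
  map_add' := by subst h; intros; rfl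
  map_smul' := by subst h; intros; rfl


open LinearMap Module CategoryTheory

section AuxRep

variable {Γ : Type} [Group Γ]

/-- restriction of a representation to an invariant submodule -/
def subRep {W : Type} [AddCommGroup W] [Module ℂ W] (σ : Representation ℂ Γ W)
    (p : Submodule ℂ W) (hp : ∀ g : Γ, ∀ v ∈ p, σ g v ∈ p) : Representation ℂ Γ p where
  toFun g := (σ g).restrict (hp g)
  map_one' := by ext v; simp [LinearMap.restrict_apply]
  map_mul' g h := by ext v; simp [LinearMap.restrict_apply]

/-- quotient representation -/
def quotRep {W : Type} [AddCommGroup W] [Module ℂ W] (σ : Representation ℂ Γ W)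
    (p : Submodule ℂ W) (hp : ∀ g : Γ, ∀ v ∈ p, σ g v ∈ p) : Representation ℂ Γ (W ⧸ p) where
  toFun g := p.mapQ p (σ g) (fun v hv => hp g v hv)
  map_one' := by apply Submodule.linearMap_qext; ext v; simp
  map_mul' g h := by apply Submodule.linearMap_qext; ext v; simp [Submodule.mapQ_apply]

lemma subRep_apply {W : Type} [AddCommGroup W] [Module ℂ W] (σ : Representation ℂ Γ W)
    (p : Submodule ℂ W) (hp : ∀ g : Γ, ∀ v ∈ p, σ g v ∈ p) (g : Γ) :
    subRep σ p hp g = (σ g).restrict (hp g) := rfl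

lemma quotRep_apply {W : Type} [AddCommGroup W] [Module ℂ W] (σ : Representation ℂ Γ W)
    (p : Submodule ℂ W) (hp : ∀ g : Γ, ∀ v ∈ p, σ g v ∈ p) (g : Γ) :
    quotRep σ p hp g = p.mapQ p (σ g) (fun v hv => hp g v hv) := rfl

lemma trace_restrict_add_trace_mapQ {W : Type} [AddCommGroup W] [Module ℂ W]
    [FiniteDimensional ℂ W] (p : Submodule ℂ W) (A : W →ₗ[ℂ] W)
    (hA : ∀ v ∈ p, A v ∈ p) :
    trace ℂ W A = trace ℂ p (A.restrict hA)
      + trace ℂ (W ⧸ p) (p.mapQ p A (fun v hv => hA v hv)) := by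
  obtain ⟨q, hq⟩ := Submodule.exists_isCompl p
  set P : W →ₗ[ℂ] p := Submodule.projectionOnto p q hq with hP
  set Pq : W →ₗ[ℂ] q := Submodule.projectionOnto q p hq.symm with hPq
  have hid : p.subtype ∘ₗ P + q.subtype ∘ₗ Pq = LinearMap.id := by
    ext x
    simpa [P, Pq] using Submodule.projection_add_projection_eq_self hq x
  have h1 : trace ℂ W (A ∘ₗ (p.subtype ∘ₗ P)) = trace ℂ p (A.restrict hA) := by
    have e1 : A ∘ₗ p.subtype = p.subtype ∘ₗ (A.restrict hA) := by
      ext v; simp [LinearMap.restrict_apply]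
    calc trace ℂ W (A ∘ₗ (p.subtype ∘ₗ P))
        = trace ℂ W ((p.subtype ∘ₗ (A.restrict hA)) ∘ₗ P) := by
          rw [← LinearMap.comp_assoc, e1]
      _ = trace ℂ p (P ∘ₗ (p.subtype ∘ₗ (A.restrict hA))) := by
          rw [LinearMap.trace_comp_comm']
      _ = trace ℂ p (A.restrict hA) := by
          rw [← LinearMap.comp_assoc, hP, Submodule.projectionOnto_comp_subtype hq,
            LinearMap.id_comp]
  have key2 : ∀ x : W, Submodule.quotientEquivOfIsCompl p q hq (Submodule.Quotient.mk x)
      = Pq x := by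
    intro x
    have : (Submodule.quotientEquivOfIsCompl p q hq).symm (Pq x)
        = (Submodule.Quotient.mk x : W ⧸ p) := by
      rw [Submodule.quotientEquivOfIsCompl_symm_apply, Submodule.Quotient.eq]
      have hsum : (P x : W) + (Pq x : W) = x := Submodule.projection_add_projection_eq_self hq x
      have h0 : (P x : W) + ((Pq x : W) - x) = 0 := by
        rw [← add_sub_assoc, hsum, sub_self]
      have h2 : (Pq x : W) - x = -(P x : W) := by
        have := eq_neg_of_add_eq_zero_right h0
        simpa using this
      rw [h2]; exact neg_mem (P x).2
    rw [← this, LinearEquiv.apply_symm_apply]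
  have h2 : trace ℂ W (A ∘ₗ (q.subtype ∘ₗ Pq))
      = trace ℂ (W ⧸ p) (p.mapQ p A (fun v hv => hA v hv)) := by
    have e2 : (Submodule.quotientEquivOfIsCompl p q hq).conj
        (p.mapQ p A (fun v hv => hA v hv)) = Pq ∘ₗ (A ∘ₗ q.subtype) := by
      ext y
      have hsymm : (Submodule.quotientEquivOfIsCompl p q hq).symm y
          = (Submodule.Quotient.mk (y : W) : W ⧸ p) :=
        Submodule.quotientEquivOfIsCompl_symm_apply p q hq y
      simp only [LinearEquiv.conj_apply, LinearMap.comp_apply, LinearEquiv.coe_coe]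
      rw [hsymm, Submodule.mapQ_apply, key2]; rfl
    calc trace ℂ W (A ∘ₗ (q.subtype ∘ₗ Pq))
        = trace ℂ W ((A ∘ₗ q.subtype) ∘ₗ Pq) := by rw [LinearMap.comp_assoc]
      _ = trace ℂ q (Pq ∘ₗ (A ∘ₗ q.subtype)) := by rw [LinearMap.trace_comp_comm']
      _ = trace ℂ q ((Submodule.quotientEquivOfIsCompl p q hq).conj
            (p.mapQ p A (fun v hv => hA v hv))) := by rw [e2]
      _ = _ := LinearMap.trace_conj' _ _
  calc trace ℂ W A = trace ℂ W (A ∘ₗ LinearMap.id) := by rw [LinearMap.comp_id]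
    _ = trace ℂ W (A ∘ₗ (p.subtype ∘ₗ P) + A ∘ₗ (q.subtype ∘ₗ Pq)) := by
        rw [← LinearMap.comp_add, hid]
    _ = _ := by rw [map_add, h1, h2]

lemma schur_scalar {W : Type} [AddCommGroup W] [Module ℂ W] [FiniteDimensional ℂ W]
    (σ : Representation ℂ Γ W) (hσ : IsIrredRep σ) (T : W →ₗ[ℂ] W)
    (hT : ∀ g : Γ, T ∘ₗ σ g = σ g ∘ₗ T) : ∃ c : ℂ, T = c • LinearMap.id := by
  haveI : Nontrivial W := hσ.1
  obtain ⟨c, hc⟩ := Module.End.exists_eigenvalue (T : Module.End ℂ W)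
  refine ⟨c, ?_⟩
  set K : Submodule ℂ W := Module.End.eigenspace (T : Module.End ℂ W) c with hK
  have hinv : ∀ g : Γ, ∀ v ∈ K, σ g v ∈ K := by
    intro g v hv
    rw [Module.End.mem_eigenspace_iff] at hv ⊢
    have := LinearMap.congr_fun (hT g) v
    simp only [LinearMap.comp_apply] at this
    rw [this, hv, map_smul]
  rcases hσ.2 K hinv with h | h
  · exact absurd h hc
  · ext v
    have hv : v ∈ K := h ▸ Submodule.mem_top
    rw [Module.End.mem_eigenspace_iff] at hv
    simpa using hv

def regRep (Γ : Type) [Group Γ] : Representation ℂ Γ (Γ → ℂ) where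
  toFun g :=
    { toFun := fun φ x => φ (g⁻¹ * x)
      map_add' := fun φ ψ => rfl
      map_smul' := fun c φ => rfl }
  map_one' := by ext φ x; simp
  map_mul' g h := by ext φ x; simp [mul_assoc]

lemma trace_regRep [Fintype Γ] [DecidableEq Γ] (u : Γ) :
    trace ℂ (Γ → ℂ) (regRep Γ u) = if u = 1 then (Fintype.card Γ : ℂ) else 0 := by
  rw [trace_eq_matrix_trace ℂ (Pi.basisFun ℂ Γ)]
  rw [Matrix.trace]
  have hentry : ∀ x : Γ, LinearMap.toMatrix (Pi.basisFun ℂ Γ) (Pi.basisFun ℂ Γ)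
      (regRep Γ u) x x = if u⁻¹ * x = x then 1 else 0 := by
    intro x
    rw [LinearMap.toMatrix_apply]
    simp [regRep, Pi.basisFun_apply, Pi.single_apply]
  simp only [Matrix.diag, hentry]
  by_cases hu : u = 1
  · subst hu; simp
  · rw [if_neg hu]
    apply Finset.sum_eq_zero
    intro x _
    rw [if_neg]
    intro hx
    exact hu (by
      have h1 : u⁻¹ * x = 1 * x := by simpa using hx
      have : u⁻¹ = 1 := mul_right_cancel h1
      simpa using congrArg (·⁻¹) this)

lemma simple_of_isIrredRep {W : Type} [AddCommGroup W] [Module ℂ W] [FiniteDimensional ℂ W]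
    (σ : Representation ℂ Γ W) (hσ : IsIrredRep σ) :
    Simple (FDRep.of σ) := by
  constructor
  intro Y f hf
  haveI : Nontrivial W := hσ.1
  constructor
  · intro hiso h0
    have hf0 : f.hom = 0 := by rw [h0]; rfl
    obtain ⟨w, hw⟩ := exists_ne (0 : W)
    have h4 : f.hom ((CategoryTheory.inv f).hom w) = w := by
      have h3 := congrArg (fun φ : FDRep.of σ ⟶ FDRep.of σ => φ.hom w) (IsIso.inv_hom_id f)
      simp only [Action.comp_hom, Action.id_hom] at h3
      exact h3
    rw [hf0] at h4
    exact hw (h4.symm.trans rfl)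
  · intro hne
    set F : Y.V →ₗ[ℂ] W := f.hom.hom.hom with hF
    have hcomm : ∀ (g : Γ) (v : Y.V), F (Y.ρ g v) = σ g (F v) := by
      intro g v
      exact congrArg (fun φ => φ v) (f.comm g)
    -- injectivity
    have hinj : Function.Injective F := by
      rw [← LinearMap.ker_eq_bot]
      set K := LinearMap.ker F with hKdef
      have hKinv : ∀ g : Γ, ∀ v ∈ K, Y.ρ g v ∈ K := by
        intro g v hv
        rw [LinearMap.mem_ker] at hv ⊢
        exact (hcomm g v).trans (by rw [hv, map_zero])
      let Z : FDRep ℂ Γ := FDRep.of (subRep Y.ρ K hKinv)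
      let ι : Z ⟶ Y := ⟨FGModuleCat.ofHom K.subtype, fun g => rfl⟩
      have hι : ι ≫ f = (0 : Z ⟶ Y) ≫ f := by
        rw [Limits.zero_comp]
        apply Action.Hom.ext
        apply FGModuleCat.hom_ext
        apply LinearMap.ext
        intro v
        exact v.2
      have hι0 : ι = 0 := Mono.right_cancellation _ _ hι
      ext v
      constructor
      · intro hv
        have := congrArg (fun φ => φ.hom ⟨v, hv⟩) hι0
        exact (Submodule.mem_bot ℂ).2 (this.trans rfl)
      · intro hv
        simp only [Submodule.mem_bot] at hv
        simp [hv]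
    -- surjectivity
    have hsurj : Function.Surjective F := by
      rw [← LinearMap.range_eq_top]
      have hrinv : ∀ g : Γ, ∀ v ∈ LinearMap.range F, σ g v ∈ LinearMap.range F := by
        rintro g v ⟨w, rfl⟩
        exact ⟨Y.ρ g w, hcomm g w⟩
      rcases hσ.2 _ hrinv with h | h
      · exfalso
        apply hne
        apply Action.Hom.ext
        apply FGModuleCat.hom_ext
        apply LinearMap.ext
        intro v
        have hv : F v ∈ LinearMap.range F := ⟨v, rfl⟩
        rw [h] at hv
        show F v = (0 : Y ⟶ FDRep.of σ).hom v
        exact (by simpa using hv : F v = 0)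
      · exact h
    let e : Y.V ≃ₗ[ℂ] W := LinearEquiv.ofBijective F ⟨hinj, hsurj⟩
    have heF : ∀ v : Y.V, e v = F v := fun v => rfl
    have hecomm : ∀ (g : Γ) (w : W), (e.symm (σ g w) : Y.V) = Y.ρ g (e.symm w) := by
      intro g w
      apply hinj
      have h1 : F (e.symm (σ g w)) = σ g w := e.apply_symm_apply _
      have h2 : F (Y.ρ g (e.symm w)) = σ g (F (e.symm w)) := hcomm g _
      rw [h1, h2]
      congr 1
      exact (e.apply_symm_apply w).symm
    refine ⟨⟨⟨FGModuleCat.ofHom (e.symm : W →ₗ[ℂ] Y.V), fun g => ?_⟩, ?_, ?_⟩⟩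
    · apply FGModuleCat.hom_ext
      apply LinearMap.ext
      intro w
      show e.symm (σ g w) = Y.ρ g (e.symm w)
      exact hecomm g w
    · apply Action.Hom.ext
      apply FGModuleCat.hom_ext
      apply LinearMap.ext
      intro v
      show e.symm (F v) = v
      exact e.symm_apply_apply v
    · apply Action.Hom.ext
      apply FGModuleCat.hom_ext
      apply LinearMap.ext
      intro w
      show F (e.symm w) = w
      exact e.apply_symm_apply w

lemma row_orth [Fintype Γ] {Ghat : Type} [DecidableEq Ghat]
    (V : Ghat → Type) [∀ r, AddCommGroup (V r)] [∀ r, Module ℂ (V r)]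
    [∀ r, FiniteDimensional ℂ (V r)]
    (ρ : ∀ r, Representation ℂ Γ (V r))
    (hirr : ∀ r, IsIrredRep (ρ r))
    (hdist : ∀ r r', RepIso (ρ r) (ρ r') → r = r')
    (r r' : Ghat) :
    ∑ g : Γ, trace ℂ (V r) (ρ r g) * trace ℂ (V r') (ρ r' g⁻¹)
      = if r = r' then (Fintype.card Γ : ℂ) else 0 := by
  letI : Fintype Γ := ‹Fintype Γ›
  letI : Invertible ((Nat.card Γ : ℂ)) :=
    invertibleOfNonzero (Nat.cast_ne_zero.2 Nat.card_pos.ne')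
  haveI hs1 : Simple (FDRep.of (ρ r)) := simple_of_isIrredRep (ρ r) (hirr r)
  haveI hs2 : Simple (FDRep.of (ρ r')) := simple_of_isIrredRep (ρ r') (hirr r')
  have h := FDRep.char_orthonormal (k := ℂ) (G := Γ)
    (FDRep.of (ρ r)) (FDRep.of (ρ r'))
  have hiso : Nonempty ((FDRep.of (ρ r) : FDRep ℂ Γ) ≅ FDRep.of (ρ r')) ↔ r = r' := by
    constructor
    · rintro ⟨i⟩
      apply hdist
      have i' : (FDRep.of (ρ r) : FDRep ℂ Γ) ≅ FDRep.of (ρ r') := i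
      refine ⟨FDRep.isoToLinearEquiv i', fun g v => ?_⟩
      have h3 := FDRep.Iso.conj_ρ i' g
      have h4 : ∀ w, (FDRep.of (ρ r')).ρ g w = (FDRep.isoToLinearEquiv i')
          ((FDRep.of (ρ r)).ρ g ((FDRep.isoToLinearEquiv i').symm w)) := by
        intro w; rw [h3]; rfl
      have h5 := h4 ((FDRep.isoToLinearEquiv i') v)
      rw [LinearEquiv.symm_apply_apply] at h5
      exact h5.symm
    · rintro rfl
      exact ⟨Iso.refl _⟩
  rw [hiso] at h
  have hS : (∑ g : Γ, (FDRep.of (ρ r)).character g * (FDRep.of (ρ r')).character g⁻¹)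
      = ∑ g : Γ, trace ℂ (V r) (ρ r g) * trace ℂ (V r') (ρ r' g⁻¹) := rfl
  rw [← hS]
  have h2 := congrArg (fun z => ((Nat.card Γ : ℂ)) * z) h
  simp only [← mul_assoc, mul_inv_cancel₀ (Nat.cast_ne_zero.2 Nat.card_pos.ne' : (Nat.card Γ : ℂ) ≠ 0), one_mul] at h2
  rw [h2]
  have hcard : (Nat.card Γ : ℂ) = (Fintype.card Γ : ℂ) := by rw [Nat.card_eq_fintype_card]
  rw [hcard]
  split_ifs with hrr
  · simp
  · simp

section Family

variable [Fintype Γ] [DecidableEq Γ] {Ghat : Type} [DecidableEq Ghat] [Fintype Ghat]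
    (V : Ghat → Type) [∀ r, AddCommGroup (V r)] [∀ r, Module ℂ (V r)]
    [∀ r, FiniteDimensional ℂ (V r)]
    (ρ : ∀ r, Representation ℂ Γ (V r))

lemma pairing_zero
    (hcomplete : ∀ (W : Type) [AddCommGroup W] [Module ℂ W] [FiniteDimensional ℂ W]
      (σ : Representation ℂ Γ W), IsIrredRep σ → ∃ r, RepIso σ (ρ r))
    (f : Γ → ℂ)
    (hcl : ∀ h x : Γ, f (h * x * h⁻¹) = f x)
    (hf : ∀ r, ∑ g : Γ, f g * trace ℂ (V r) (ρ r g) = 0) :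
    ∀ (n : ℕ) (W : Type) [AddCommGroup W] [Module ℂ W] [FiniteDimensional ℂ W],
      Module.finrank ℂ W = n → ∀ (σ : Representation ℂ Γ W) (u : Γ),
      ∑ g : Γ, f g * trace ℂ W (σ (g * u)) = 0 := by
  intro n
  induction n using Nat.strong_induction_on with
  | _ n IH =>
    intro W _ _ _ hn σ u
    rcases subsingleton_or_nontrivial W with hW | hW
    · haveI : Subsingleton (W →ₗ[ℂ] W) := inferInstance
      have : ∀ g : Γ, σ (g * u) = 0 := fun g => Subsingleton.elim _ _
      simp [this]
    · by_cases hirrW : IsIrredRep σ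
      · obtain ⟨r, e, he⟩ := hcomplete W σ hirrW
        have hchar : ∀ g : Γ, trace ℂ W (σ g) = trace ℂ (V r) (ρ r g) := by
          intro g
          have hconj : e.conj (σ g) = ρ r g := by
            apply LinearMap.ext
            intro v
            rw [LinearEquiv.conj_apply]
            simp only [LinearMap.comp_apply, LinearEquiv.coe_coe]
            rw [he g (e.symm v), LinearEquiv.apply_symm_apply]
          rw [← hconj, LinearMap.trace_conj']
        set T : W →ₗ[ℂ] W := ∑ g : Γ, f g • (σ g : W →ₗ[ℂ] W) with hT
        have hTcomm : ∀ h : Γ, T ∘ₗ σ h = σ h ∘ₗ T := by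
          intro h
          have h1 : T ∘ₗ σ h = ∑ g : Γ, f g • (σ (g * h) : W →ₗ[ℂ] W) := by
            apply LinearMap.ext; intro v
            simp only [hT, LinearMap.comp_apply, LinearMap.sum_apply, LinearMap.smul_apply,
              map_mul, Module.End.mul_apply]
          have h2 : σ h ∘ₗ T = ∑ g : Γ, f g • (σ (h * g) : W →ₗ[ℂ] W) := by
            apply LinearMap.ext; intro v
            simp only [hT, LinearMap.comp_apply, LinearMap.sum_apply, LinearMap.smul_apply,
              map_mul, Module.End.mul_apply, map_sum, map_smul]
          rw [h1, h2]
          refine Fintype.sum_equiv ⟨fun g => h⁻¹ * g * h, fun g => h * g * h⁻¹,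
            fun g => by group, fun g => by group⟩ _ _ fun g => ?_
          simp only [Equiv.coe_fn_mk]
          have hf1 : f (h⁻¹ * g * h) = f g := by
            have := hcl h⁻¹ g
            rwa [inv_inv] at this
          rw [hf1]
          congr 2
          group
        obtain ⟨c, hc⟩ := schur_scalar σ hirrW T hTcomm
        have htr : trace ℂ W T = 0 := by
          rw [hT, map_sum]
          have : ∀ g : Γ, trace ℂ W (f g • (σ g : W →ₗ[ℂ] W)) = f g * trace ℂ W (σ g) := by
            intro g; rw [map_smul, smul_eq_mul]
          rw [Finset.sum_congr rfl fun g _ => this g]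
          calc ∑ g : Γ, f g * trace ℂ W (σ g)
              = ∑ g : Γ, f g * trace ℂ (V r) (ρ r g) := by
                exact Finset.sum_congr rfl fun g _ => by rw [hchar]
            _ = 0 := hf r
        have hc0 : c = 0 := by
          have h1 : trace ℂ W T = c * (finrank ℂ W : ℂ) := by
            rw [hc, map_smul, smul_eq_mul, LinearMap.trace_id]
          rw [htr] at h1
          have h2 : (finrank ℂ W : ℂ) ≠ 0 :=
            Nat.cast_ne_zero.2 finrank_pos.ne'
          exact (mul_eq_zero.1 h1.symm).resolve_right h2
        have hT0 : T = 0 := by rw [hc, hc0, zero_smul]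
        have hfinal : (∑ g : Γ, f g • (σ (g * u) : W →ₗ[ℂ] W)) = 0 := by
          have : (∑ g : Γ, f g • (σ (g * u) : W →ₗ[ℂ] W)) = T ∘ₗ σ u := by
            apply LinearMap.ext; intro v
            simp only [hT, LinearMap.comp_apply, LinearMap.sum_apply, LinearMap.smul_apply,
              map_mul, Module.End.mul_apply]
          rw [this, hT0, LinearMap.zero_comp]
        calc ∑ g : Γ, f g * trace ℂ W (σ (g * u))
            = trace ℂ W (∑ g : Γ, f g • (σ (g * u) : W →ₗ[ℂ] W)) := by
              rw [map_sum]
              exact Finset.sum_congr rfl fun g _ => by rw [map_smul, smul_eq_mul]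
          _ = 0 := by rw [hfinal, map_zero]
      · rw [IsIrredRep, not_and] at hirrW
        have h2 := hirrW hW
        push_neg at h2
        obtain ⟨p, hpinv, hpbot, hptop⟩ := h2
        have hd1 : finrank ℂ p < n := by
          rw [← hn]
          exact Submodule.finrank_lt hptop
        have hppos : 0 < finrank ℂ p := by
          haveI : Nontrivial p := Submodule.nontrivial_iff_ne_bot.2 hpbot
          exact finrank_pos
        have hd2 : finrank ℂ (W ⧸ p) < n := by
          have := Submodule.finrank_quotient_add_finrank p
          omega
        have hIH1 := IH _ hd1 p rfl (subRep σ p hpinv) u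
        have hIH2 := IH _ hd2 (W ⧸ p) rfl (quotRep σ p hpinv) u
        have hsplit : ∀ x : Γ, trace ℂ W (σ x)
            = trace ℂ p (subRep σ p hpinv x) + trace ℂ (W ⧸ p) (quotRep σ p hpinv x) := by
          intro x
          rw [subRep_apply, quotRep_apply]
          exact trace_restrict_add_trace_mapQ p (σ x) (hpinv x)
        calc ∑ g : Γ, f g * trace ℂ W (σ (g * u))
            = ∑ g : Γ, (f g * trace ℂ p (subRep σ p hpinv (g * u))
              + f g * trace ℂ (W ⧸ p) (quotRep σ p hpinv (g * u))) := by
              refine Finset.sum_congr rfl fun g _ => ?_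
              rw [hsplit, mul_add]
          _ = 0 := by rw [Finset.sum_add_distrib, hIH1, hIH2, add_zero]

-- trace is a class function
lemma trace_rep_conj {W : Type} [AddCommGroup W] [Module ℂ W] [FiniteDimensional ℂ W]
    (σ : Representation ℂ Γ W) (h x : Γ) :
    trace ℂ W (σ (h * x * h⁻¹)) = trace ℂ W (σ x) := by
  have : h * x * h⁻¹ = (h * x) * h⁻¹ := by rw [mul_assoc]
  rw [map_mul, LinearMap.trace_mul_comm, ← map_mul, inv_mul_cancel_left]

lemma classfn_eq_zero
    (hcomplete : ∀ (W : Type) [AddCommGroup W] [Module ℂ W] [FiniteDimensional ℂ W]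
      (σ : Representation ℂ Γ W), IsIrredRep σ → ∃ r, RepIso σ (ρ r))
    (f : Γ → ℂ)
    (hcl : ∀ h x : Γ, f (h * x * h⁻¹) = f x)
    (hf : ∀ r, ∑ g : Γ, f g * trace ℂ (V r) (ρ r g) = 0) (x : Γ) : f x = 0 := by
  have h := pairing_zero V ρ hcomplete f hcl hf (finrank ℂ (Γ → ℂ)) (Γ → ℂ) rfl
    (regRep Γ) x⁻¹
  have h2 : ∀ g : Γ, f g * trace ℂ (Γ → ℂ) (regRep Γ (g * x⁻¹))
      = if g = x then f g * (Fintype.card Γ : ℂ) else 0 := by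
    intro g
    rw [trace_regRep]
    by_cases hg : g = x
    · subst hg; simp
    · rw [if_neg hg, if_neg (fun hh => hg (by rwa [mul_inv_eq_one] at hh)), mul_zero]
  rw [Finset.sum_congr rfl fun g _ => h2 g, Finset.sum_ite_eq' Finset.univ x
    (fun g => f g * (Fintype.card Γ : ℂ)), if_pos (Finset.mem_univ x)] at h
  have hN : (Fintype.card Γ : ℂ) ≠ 0 := Nat.cast_ne_zero.2 Fintype.card_ne_zero
  exact (mul_eq_zero.1 h).resolve_right hN

-- cast of cardinality of a subtype as a sum of indicators
lemma card_subtype_eq_sum {P : Γ → Prop} [DecidablePred P] :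
    ((Fintype.card {g : Γ // P g}) : ℂ) = ∑ g : Γ, if P g then (1 : ℂ) else 0 := by
  rw [Fintype.card_subtype, Finset.card_filter]
  push_cast
  exact Finset.sum_congr rfl fun g _ => by split_ifs <;> simp

/-- **Column orthogonality / key counting formula.** -/
lemma key_lemma
    (hirr : ∀ r, IsIrredRep (ρ r))
    (hdist : ∀ r r', RepIso (ρ r) (ρ r') → r = r')
    (hcomplete : ∀ (W : Type) [AddCommGroup W] [Module ℂ W] [FiniteDimensional ℂ W]
      (σ : Representation ℂ Γ W), IsIrredRep σ → ∃ r, RepIso σ (ρ r))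
    (a b : Γ) :
    ∑ r : Ghat, trace ℂ (V r) (ρ r a⁻¹) * trace ℂ (V r) (ρ r b)
      = ((Fintype.card {g : Γ // g * a * g⁻¹ = b}) : ℂ) := by
  set F : Γ → ℂ := fun x => ((Fintype.card {g : Γ // g * x * g⁻¹ = b}) : ℂ)
    - ∑ r : Ghat, trace ℂ (V r) (ρ r b) * trace ℂ (V r) (ρ r x⁻¹) with hF
  have hcl : ∀ h x : Γ, F (h * x * h⁻¹) = F x := by
    intro h x
    have hcard : ((Fintype.card {g : Γ // g * (h * x * h⁻¹) * g⁻¹ = b}) : ℂ)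
        = ((Fintype.card {g : Γ // g * x * g⁻¹ = b}) : ℂ) := by
      congr 1
      apply Fintype.card_congr
      refine ⟨fun ⟨g, hg⟩ => ⟨g * h, ?_⟩, fun ⟨g, hg⟩ => ⟨g * h⁻¹, ?_⟩, ?_, ?_⟩
      · rw [← hg]; group
      · rw [← hg]; group
      · rintro ⟨g, hg⟩; simp [mul_assoc]
      · rintro ⟨g, hg⟩; simp [mul_assoc]
    have hchi : ∀ r : Ghat, trace ℂ (V r) (ρ r (h * x * h⁻¹)⁻¹)
        = trace ℂ (V r) (ρ r x⁻¹) := by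
      intro r
      have hinv : (h * x * h⁻¹)⁻¹ = h * x⁻¹ * h⁻¹ := by group
      rw [hinv, trace_rep_conj]
    rw [hF]
    simp only
    rw [hcard]
    congr 1
    exact Finset.sum_congr rfl fun r _ => by rw [hchi r]
  have hpair : ∀ r : Ghat, ∑ x : Γ, F x * trace ℂ (V r) (ρ r x) = 0 := by
    intro r
    have hterm1 : ∑ x : Γ, ((Fintype.card {g : Γ // g * x * g⁻¹ = b}) : ℂ)
        * trace ℂ (V r) (ρ r x) = (Fintype.card Γ : ℂ) * trace ℂ (V r) (ρ r b) := by
      have step1 : ∀ x : Γ, ((Fintype.card {g : Γ // g * x * g⁻¹ = b}) : ℂ)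
          * trace ℂ (V r) (ρ r x)
          = ∑ g : Γ, (if g * x * g⁻¹ = b then (1:ℂ) else 0) * trace ℂ (V r) (ρ r x) := by
        intro x
        rw [card_subtype_eq_sum, Finset.sum_mul]
      rw [Finset.sum_congr rfl fun x _ => step1 x, Finset.sum_comm]
      have step2 : ∀ g : Γ, ∑ x : Γ, (if g * x * g⁻¹ = b then (1:ℂ) else 0)
          * trace ℂ (V r) (ρ r x) = trace ℂ (V r) (ρ r b) := by
        intro g
        have hiff : ∀ x : Γ, (g * x * g⁻¹ = b) ↔ (x = g⁻¹ * b * g) := by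
          intro x
          constructor
          · intro hx; rw [← hx]; group
          · intro hx; rw [hx]; group
        rw [Finset.sum_congr rfl fun x _ => by
          rw [if_congr (hiff x) rfl rfl, ite_mul, one_mul, zero_mul]]
        rw [Finset.sum_ite_eq' Finset.univ (g⁻¹ * b * g) (fun x => trace ℂ (V r) (ρ r x)),
          if_pos (Finset.mem_univ _)]
        have : g⁻¹ * b * g = g⁻¹ * b * (g⁻¹)⁻¹ := by rw [inv_inv]
        rw [this, trace_rep_conj]
      rw [Finset.sum_congr rfl fun g _ => step2 g, Finset.sum_const, Finset.card_univ,
        nsmul_eq_mul]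
    have hterm2 : ∑ x : Γ, (∑ r' : Ghat, trace ℂ (V r') (ρ r' b)
        * trace ℂ (V r') (ρ r' x⁻¹)) * trace ℂ (V r) (ρ r x)
        = (Fintype.card Γ : ℂ) * trace ℂ (V r) (ρ r b) := by
      have swap : ∑ x : Γ, (∑ r' : Ghat, trace ℂ (V r') (ρ r' b)
          * trace ℂ (V r') (ρ r' x⁻¹)) * trace ℂ (V r) (ρ r x)
          = ∑ r' : Ghat, trace ℂ (V r') (ρ r' b)
            * ∑ x : Γ, trace ℂ (V r) (ρ r x) * trace ℂ (V r') (ρ r' x⁻¹) := by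
        rw [Finset.sum_congr rfl fun x (_ : x ∈ Finset.univ) => Finset.sum_mul Finset.univ
          (fun r' => trace ℂ (V r') (ρ r' b) * trace ℂ (V r') (ρ r' x⁻¹))
          (trace ℂ (V r) (ρ r x))]
        rw [Finset.sum_comm]
        refine Finset.sum_congr rfl fun r' _ => ?_
        rw [Finset.mul_sum]
        refine Finset.sum_congr rfl fun x _ => by ring
      rw [swap]
      have : ∀ r' : Ghat, trace ℂ (V r') (ρ r' b)
          * (∑ x : Γ, trace ℂ (V r) (ρ r x) * trace ℂ (V r') (ρ r' x⁻¹))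
          = if r = r' then trace ℂ (V r') (ρ r' b) * (Fintype.card Γ : ℂ) else 0 := by
        intro r'
        rw [row_orth V ρ hirr hdist r r']
        split_ifs with h
        · rfl
        · rw [mul_zero]
      rw [Finset.sum_congr rfl fun r' _ => this r', Finset.sum_ite_eq Finset.univ r
        (fun r' => trace ℂ (V r') (ρ r' b) * (Fintype.card Γ : ℂ)),
        if_pos (Finset.mem_univ _), mul_comm]
    rw [hF]
    simp only [sub_mul]
    rw [Finset.sum_sub_distrib, hterm1, hterm2, sub_self]
  have hzero := classfn_eq_zero V ρ hcomplete F hcl hpair a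
  rw [hF] at hzero
  simp only [sub_eq_zero] at hzero
  rw [hzero]
  exact Finset.sum_congr rfl fun r _ => mul_comm _ _

end Family

end AuxRep

lemma card_conj_set_pos {K : Type} [Group K] (a b : K) (hc : IsConj a b) :
    Nat.card {h : K // h * a * h⁻¹ = b}
      = Nat.card (Subgroup.centralizer ({a} : Set K)) := by
  obtain ⟨c, hcab⟩ := isConj_iff.1 hc
  apply Nat.card_congr
  refine ⟨fun ⟨h, hh⟩ => ⟨c⁻¹ * h, ?_⟩, fun ⟨z, hz⟩ => ⟨c * z, ?_⟩, ?_, ?_⟩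
  · rw [Subgroup.mem_centralizer_iff]
    rintro y hy
    rw [Set.mem_singleton_iff] at hy
    rw [hy]
    have h1 : (c⁻¹ * h) * a * (c⁻¹ * h)⁻¹ = a := by
      have h2 : c⁻¹ * (h * a * h⁻¹) * c = c⁻¹ * b * c := by rw [hh]
      rw [← hcab] at h2
      calc (c⁻¹ * h) * a * (c⁻¹ * h)⁻¹ = c⁻¹ * (h * a * h⁻¹) * c := by group
        _ = c⁻¹ * (c * a * c⁻¹) * c := h2
        _ = a := by group
    calc a * (c⁻¹ * h) = ((c⁻¹ * h) * a * (c⁻¹ * h)⁻¹) * (c⁻¹ * h) := by rw [h1]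
      _ = (c⁻¹ * h) * a := by group
  · have hz' : z * a * z⁻¹ = a := by
      have := (Subgroup.mem_centralizer_iff.1 hz) a rfl
      rw [← this]; group
    calc (c * z) * a * (c * z)⁻¹ = c * (z * a * z⁻¹) * c⁻¹ := by group
      _ = b := by rw [hz']; exact hcab
  · rintro ⟨h, hh⟩; simp
  · rintro ⟨z, hz⟩; simp

lemma card_conj_set_neg {K : Type} [Group K] (a b : K) (hc : ¬ IsConj a b) :
    Nat.card {h : K // h * a * h⁻¹ = b} = 0 := by
  have : IsEmpty {h : K // h * a * h⁻¹ = b} := by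
    constructor
    rintro ⟨h, hh⟩
    exact hc (isConj_iff.2 ⟨h, hh⟩)
  exact Nat.card_of_isEmpty

/-- Let `R = {ρ_r : r ∈ Ĝ}` contain exactly one representative of each
isomorphism class of irreducible finite-dimensional complex representations of `G = ker j`,
with characters `χ_ρ = tr ∘ ρ`.  Then for all `g₁, g₂ ∈ G`,
`∑_{ρ∈R} ∑_{q∈Q} χ_ρ(g₁⁻¹)·χ_ρ(s(q)·g₂·s(q)⁻¹)` equals `|C_H(g₁)|` if `g₁` and `g₂` are
conjugate in `H`, and equals `0` otherwise. -/
theorem stmt19 {H Q : Type} [Group H] [Group Q] [Fintype H] [Fintype Q]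
    (j : H →* Q) (hj : Function.Surjective j)
    (s : Q → H) (hs : ∀ q, j (s q) = q) (hs1 : s 1 = 1)
    {Ghat : Type} [Fintype Ghat]
    (V : Ghat → Type) [∀ r, AddCommGroup (V r)] [∀ r, Module ℂ (V r)]
    [∀ r, FiniteDimensional ℂ (V r)]
    (ρ : ∀ r, Representation ℂ j.ker (V r))
    (hirr : ∀ r, IsIrredRep (ρ r))
    (hdist : ∀ r r', RepIso (ρ r) (ρ r') → r = r')
    (hcomplete : ∀ (W : Type) [AddCommGroup W] [Module ℂ W] [FiniteDimensional ℂ W]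
      (σ : Representation ℂ j.ker W), IsIrredRep σ → ∃ r, RepIso σ (ρ r))
    (g₁ g₂ : j.ker) :
    (IsConj (g₁ : H) (g₂ : H) →
      ∑ r : Ghat, ∑ q : Q,
          LinearMap.trace ℂ (V r) (ρ r g₁⁻¹) *
            LinearMap.trace ℂ (V r) (conjRep j (ρ r) (s q) g₂) =
        (Nat.card (Subgroup.centralizer ({(g₁ : H)} : Set H)) : ℂ)) ∧
    (¬ IsConj (g₁ : H) (g₂ : H) →
      ∑ r : Ghat, ∑ q : Q,
          LinearMap.trace ℂ (V r) (ρ r g₁⁻¹) *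
            LinearMap.trace ℂ (V r) (conjRep j (ρ r) (s q) g₂) = 0) := by
  classical
  letI : Fintype (j.ker) := Fintype.ofFinite _
  have hker : ∀ q : Q, s q * (g₂ : H) * (s q)⁻¹ ∈ j.ker := by
    intro q
    have hg2 : j (g₂ : H) = 1 := g₂.2
    rw [MonoidHom.mem_ker]
    simp [hs, hg2]
  set c : Q → j.ker := fun q => ⟨s q * (g₂ : H) * (s q)⁻¹, hker q⟩ with hcdef
  have hconj : ∀ (r : Ghat) (q : Q), conjRep j (ρ r) (s q) g₂ = ρ r (c q) := by
    intro r q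
    have h : (MulAut.conjNormal (s q)).toMonoidHom g₂ = c q :=
      Subtype.ext (MulAut.conjNormal_apply (s q) g₂)
    show ρ r ((MulAut.conjNormal (s q)).toMonoidHom g₂) = ρ r (c q)
    rw [h]
  have hsum : ∑ r : Ghat, ∑ q : Q,
      LinearMap.trace ℂ (V r) (ρ r g₁⁻¹) *
        LinearMap.trace ℂ (V r) (conjRep j (ρ r) (s q) g₂)
      = (Nat.card {h : H // h * (g₁ : H) * h⁻¹ = (g₂ : H)} : ℂ) := by
    rw [Finset.sum_comm]
    have hq : ∀ q : Q, ∑ r : Ghat,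
        LinearMap.trace ℂ (V r) (ρ r g₁⁻¹) *
          LinearMap.trace ℂ (V r) (conjRep j (ρ r) (s q) g₂)
        = (Nat.card {g : j.ker // g * g₁ * g⁻¹ = c q} : ℂ) := by
      intro q
      have h1 : ∑ r : Ghat,
          LinearMap.trace ℂ (V r) (ρ r g₁⁻¹) *
            LinearMap.trace ℂ (V r) (conjRep j (ρ r) (s q) g₂)
          = ∑ r : Ghat, LinearMap.trace ℂ (V r) (ρ r g₁⁻¹) *
              LinearMap.trace ℂ (V r) (ρ r (c q)) :=
        Finset.sum_congr rfl fun r _ => by rw [hconj r q]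
      rw [h1, key_lemma V ρ hirr hdist hcomplete g₁ (c q), Nat.card_eq_fintype_card]
    rw [Finset.sum_congr rfl fun q _ => hq q]
    rw [← Nat.cast_sum]
    congr 1
    have hE : (Σ q : Q, {g : j.ker // g * g₁ * g⁻¹ = c q})
        ≃ {h : H // h * (g₁ : H) * h⁻¹ = (g₂ : H)} := by
      apply Equiv.ofBijective (f := fun x => ⟨(s x.1)⁻¹ * (x.2 : j.ker), by
        obtain ⟨q, g, hg⟩ := x
        have hg' : (g : H) * (g₁ : H) * (g : H)⁻¹ = s q * (g₂ : H) * (s q)⁻¹ := by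
          have := congrArg (fun z : j.ker => (z : H)) hg
          simpa using this
        show ((s q)⁻¹ * (g : H)) * (g₁ : H) * ((s q)⁻¹ * (g : H))⁻¹ = (g₂ : H)
        calc ((s q)⁻¹ * (g : H)) * (g₁ : H) * ((s q)⁻¹ * (g : H))⁻¹
            = (s q)⁻¹ * ((g : H) * (g₁ : H) * (g : H)⁻¹) * s q := by group
          _ = (s q)⁻¹ * (s q * (g₂ : H) * (s q)⁻¹) * s q := by rw [hg']
          _ = (g₂ : H) := by group⟩)
      constructor
      · rintro ⟨q, g, hg⟩ ⟨q', g', hg'⟩ hxy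
        rw [Subtype.ext_iff] at hxy
        have hxy' : (s q)⁻¹ * (g : H) = (s q')⁻¹ * (g' : H) := hxy
        have hq : q = q' := by
          have h1 := congrArg j hxy'
          have hgk : j (g : H) = 1 := MonoidHom.mem_ker.1 g.2
          have hgk' : j (g' : H) = 1 := MonoidHom.mem_ker.1 g'.2
          simp only [map_mul, map_inv, hs, hgk, hgk', mul_one] at h1
          exact inv_injective h1
        subst hq
        have hgg : (g : H) = (g' : H) := by
          have := mul_left_cancel (a := (s q)⁻¹) hxy'
          exact this
        exact congrArg (Sigma.mk q) (Subtype.ext (Subtype.ext hgg))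
      · rintro ⟨h, hh⟩
        have hmem : s ((j h)⁻¹) * h ∈ j.ker := by
          rw [MonoidHom.mem_ker]
          simp [hs]
        have hcond : (⟨s ((j h)⁻¹) * h, hmem⟩ : j.ker) * g₁
            * (⟨s ((j h)⁻¹) * h, hmem⟩ : j.ker)⁻¹ = c ((j h)⁻¹) := by
          apply Subtype.ext
          show (s ((j h)⁻¹) * h) * (g₁ : H) * (s ((j h)⁻¹) * h)⁻¹
            = s ((j h)⁻¹) * (g₂ : H) * (s ((j h)⁻¹))⁻¹
          calc (s ((j h)⁻¹) * h) * (g₁ : H) * (s ((j h)⁻¹) * h)⁻¹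
              = s ((j h)⁻¹) * (h * (g₁ : H) * h⁻¹) * (s ((j h)⁻¹))⁻¹ := by group
            _ = s ((j h)⁻¹) * (g₂ : H) * (s ((j h)⁻¹))⁻¹ := by rw [hh]
        refine ⟨⟨(j h)⁻¹, ⟨⟨s ((j h)⁻¹) * h, hmem⟩, hcond⟩⟩, ?_⟩
        apply Subtype.ext
        show (s ((j h)⁻¹))⁻¹ * (s ((j h)⁻¹) * h) = h
        group
    calc ∑ q : Q, Nat.card {g : j.ker // g * g₁ * g⁻¹ = c q}
        = ∑ q : Q, Fintype.card {g : j.ker // g * g₁ * g⁻¹ = c q} := by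
          exact Finset.sum_congr rfl fun q _ => Nat.card_eq_fintype_card
      _ = Fintype.card (Σ q : Q, {g : j.ker // g * g₁ * g⁻¹ = c q}) :=
          Fintype.card_sigma.symm
      _ = Fintype.card {h : H // h * (g₁ : H) * h⁻¹ = (g₂ : H)} := Fintype.card_congr hE
      _ = Nat.card {h : H // h * (g₁ : H) * h⁻¹ = (g₂ : H)} :=
          Nat.card_eq_fintype_card.symm
  constructor
  · intro hcj
    rw [hsum, card_conj_set_pos _ _ hcj]
  · intro hncj
    rw [hsum, card_conj_set_neg _ _ hncj, Nat.cast_zero]
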